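/- For every 1 ≤ i ≤ n−1, the operators A_i and R_i have the same invariant vectors, namely the i-symmetric polynomials: for every f ∈ P_n, A_i(f) = f if and only if s_i(f) = f, and R_i(f) = f if and only if s_i(f) = f; that is, ker(A_i − id) = ker(R_i − id) = Λ_n(i). -/

import Mathlib

open MvPolynomial

noncomputable section

/-- The ground field `F = ℚ(q)`, rational functions over `ℚ`. -/
abbrev F : Type := RatFunc ℚ

/-- The indeterminate `q`. -/
def q : F := RatFunc.X

/-- The polynomial ring `P_n = F[x_1, …, x_n]` (variables indexed `0, …, n-1`). -/
abbrev Pn (n : ℕ) : Type := MvPolynomial (Fin n) F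

/-- The adjacent transposition `s_i` swapping positions `i` and `i+1` (0-indexed). -/
def transp (n i : ℕ) (h : i + 1 < n) : Equiv.Perm (Fin n) :=
  Equiv.swap ⟨i, by omega⟩ ⟨i + 1, h⟩

/-- Multiplication by the variable `x_j`. -/
def Xop {n : ℕ} (j : Fin n) : Pn n →ₗ[F] Pn n := LinearMap.mulLeft F (X j)

/-- A family of candidate divided-difference operators. -/
abbrev DDFam (n : ℕ) := ∀ i : ℕ, i + 1 < n → (Pn n →ₗ[F] Pn n)

/-- `dd` is the family of divided difference operators:
`(x_i - x_{i+1}) · ∂_i f = f - s_i f`.  This determines `dd` uniquely. -/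
def IsDD {n : ℕ} (dd : DDFam n) : Prop :=
  ∀ (i : ℕ) (h : i + 1 < n) (f : Pn n),
    (X (⟨i, by omega⟩ : Fin n) - X ⟨i + 1, h⟩) * dd i h f
      = f - rename (⇑(transp n i h)) f

/-- The q-commutator operator `A_i = ∂_i ∘ X_i - q · X_i ∘ ∂_i`. -/
def Aop {n : ℕ} (dd : DDFam n) (i : ℕ) (h : i + 1 < n) : Pn n →ₗ[F] Pn n :=
  dd i h ∘ₗ Xop ⟨i, by omega⟩ - q • (Xop (⟨i, by omega⟩ : Fin n) ∘ₗ dd i h)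

/-- The operator `B_i = -(∂_i ∘ X_{i+1} - q · X_{i+1} ∘ ∂_i)`. -/
def Bop {n : ℕ} (dd : DDFam n) (i : ℕ) (h : i + 1 < n) : Pn n →ₗ[F] Pn n :=
  -(dd i h ∘ₗ Xop ⟨i + 1, h⟩ - q • (Xop (⟨i + 1, h⟩ : Fin n) ∘ₗ dd i h))

/-- Swap the exponents of `x_i` and `x_{i+1}` in a monomial exponent vector. -/
def swapIdx (n i : ℕ) (h : i + 1 < n) (d : Fin n →₀ ℕ) : Fin n →₀ ℕ :=
  Finsupp.equivMapDomain (transp n i h) d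

/-- Value of `R_i` on the monomial with exponent vector `d`. -/
def Rval {n : ℕ} (i : ℕ) (h : i + 1 < n) (d : Fin n →₀ ℕ) : Pn n :=
  if d ⟨i + 1, h⟩ < d ⟨i, by omega⟩ then q • monomial (swapIdx n i h d) (1 : F)
  else if d ⟨i, by omega⟩ < d ⟨i + 1, h⟩ then
    (1 - q) • monomial d (1 : F) + monomial (swapIdx n i h d) (1 : F)
  else monomial d (1 : F)

/-- The operator `R_i`, the linear extension of `Rval` from monomials. -/
def Rop {n : ℕ} (i : ℕ) (h : i + 1 < n) : Pn n →ₗ[F] Pn n :=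
  (basisMonomials (Fin n) F).constr F (Rval i h)

/-- Value of `R*_i` on the monomial with exponent vector `d`. -/
def Rstarval {n : ℕ} (i : ℕ) (h : i + 1 < n) (d : Fin n →₀ ℕ) : Pn n :=
  if d ⟨i + 1, h⟩ ≤ d ⟨i, by omega⟩ then monomial (swapIdx n i h d) (1 : F)
  else (1 - q) • monomial d (1 : F) + q • monomial (swapIdx n i h d) (1 : F)

/-- The operator `R*_i`, the linear extension of `Rstarval` from monomials. -/
def Rstarop {n : ℕ} (i : ℕ) (h : i + 1 < n) : Pn n →ₗ[F] Pn n :=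
  (basisMonomials (Fin n) F).constr F (Rstarval i h)

/-- `f` is a symmetric polynomial. -/
def symmP {n : ℕ} (f : Pn n) : Prop :=
  ∀ σ : Equiv.Perm (Fin n), rename (⇑σ) f = f

/-- The ideal `I_n` generated by symmetric polynomials with zero constant term. -/
def In (n : ℕ) : Ideal (Pn n) :=
  Ideal.span {f : Pn n | symmP f ∧ constantCoeff f = 0}

/-- The quotient map `P_n → P_n / I_n` as an `F`-linear map. -/
def mkI (n : ℕ) : Pn n →ₗ[F] (Pn n ⧸ In n) :=
  (Ideal.Quotient.mkₐ F (In n)).toLinearMap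

/-- `R^k`: the image in `P_n/I_n` of the homogeneous polynomials of degree `k`. -/
def RkSub (n k : ℕ) : Submodule F (Pn n ⧸ In n) :=
  Submodule.map (mkI n) (homogeneousSubmodule (Fin n) F k)

/-- The Coxeter length of a permutation: its number of inversions. -/
def len {n : ℕ} (w : Equiv.Perm (Fin n)) : ℕ :=
  (Finset.univ.filter (fun p : Fin n × Fin n => p.1 < p.2 ∧ w p.2 < w p.1)).card

/-- The staircase monomial `x_1^{n-1} x_2^{n-2} ⋯ x_{n-1}`. -/
def staircase (n : ℕ) : Pn n := ∏ j : Fin n, (X j : Pn n) ^ (n - 1 - (j : ℕ))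

/-- `S` is the family of Schubert polynomials: `S w₀` is the staircase monomial, and
`∂_i 𝔖_w = 𝔖_{w s_i}` whenever `ℓ(w s_i) < ℓ(w)`.  This determines `S` uniquely. -/
def IsSchubert {n : ℕ} (dd : DDFam n) (S : Equiv.Perm (Fin n) → Pn n) : Prop :=
  S (Fin.revPerm) = staircase n ∧
  ∀ (w : Equiv.Perm (Fin n)) (i : ℕ) (h : i + 1 < n),
    len (w * transp n i h) < len w → dd i h (S w) = S (w * transp n i h)

/-- The 3-cycle `(a, b, c)`, sending `a ↦ b`, `b ↦ c`, `c ↦ a`. -/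
def cyc3 {n : ℕ} (a b c : Fin n) : Equiv.Perm (Fin n) :=
  Equiv.swap a c * Equiv.swap a b

/-- The Hecke algebra relations for a family of operators. -/
def HeckeRels {n : ℕ} (T : ∀ i : ℕ, i + 1 < n → (Pn n →ₗ[F] Pn n)) : Prop :=
  (∀ (i : ℕ) (h : i + 2 < n),
      T i (by omega) ∘ₗ (T (i + 1) (by omega) ∘ₗ T i (by omega))
        = T (i + 1) (by omega) ∘ₗ (T i (by omega) ∘ₗ T (i + 1) (by omega))) ∧
  (∀ (i j : ℕ) (hi : i + 1 < n) (hj : j + 1 < n), (i + 1 < j ∨ j + 1 < i) →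
      T i hi ∘ₗ T j hj = T j hj ∘ₗ T i hi) ∧
  (∀ (i : ℕ) (h : i + 1 < n),
      T i h ∘ₗ T i h = (1 - q) • T i h + q • LinearMap.id)

/-- Composition `T_{j₁} ∘ T_{j₂} ∘ ⋯ ∘ T_{j_k}` along a list of indices. -/
def compFam {n : ℕ} (T : ℕ → (Pn n →ₗ[F] Pn n)) : List ℕ → (Pn n →ₗ[F] Pn n)
  | [] => LinearMap.id
  | j :: l => T j ∘ₗ compFam T l

/-- Totalized version of `Aop` (identity outside the allowed index range). -/
def Atot {n : ℕ} (dd : DDFam n) (j : ℕ) : Pn n →ₗ[F] Pn n :=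
  if h : j + 1 < n then Aop dd j h else LinearMap.id

/-- Totalized version of `Rop` (identity outside the allowed index range). -/
def Rtot (n : ℕ) (j : ℕ) : Pn n →ₗ[F] Pn n :=
  if h : j + 1 < n then Rop j h else LinearMap.id

/-- The (0-indexed) index set `J_μ`: all `j ∈ {0, …, n-2}` such that `j+1` is not a
partial sum `μ_1 + ⋯ + μ_k` of the partition. -/
def Jlist (n : ℕ) (μ : List ℕ) : List ℕ :=
  (List.range (n - 1)).filter
    (fun j => (List.range (μ.length + 1)).all (fun k => (μ.take k).sum != j + 1))

/-- The value `w(a)` of a permutation, as a function on naturals. -/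
def permVal {n : ℕ} (w : Equiv.Perm (Fin n)) (a : ℕ) : ℕ :=
  if h : a < n then ((w ⟨a, h⟩ : Fin n) : ℕ) else a

open scoped Classical in
/-- The factor `m_q` attached to the block of positions `p, p+1, …, p+m-1`:
`(-q)^j` if, within the block, `w` has descents exactly at the first `j` places
(i.e. `w` decreases on the first `j+1` entries and then increases), and `0` otherwise. -/
def blockWeight {n : ℕ} (w : Equiv.Perm (Fin n)) (p m : ℕ) : F :=
  if h : ∃ j, j < m ∧ ∀ a : ℕ, p ≤ a → a + 1 < p + m →
      (permVal w (a + 1) < permVal w a ↔ a < p + j)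
  then (-q) ^ h.choose else 0

/-- `weight_q^μ(w) = ∏ m_q(w_i)`, the product of the block factors over the blocks of `μ`. -/
def weightq {n : ℕ} (μ : List ℕ) (w : Equiv.Perm (Fin n)) : F :=
  ∏ t ∈ Finset.range μ.length, blockWeight w ((μ.take t).sum) (μ.getD t 0)

/-- `μ` is a partition of `n`. -/
def IsPartition (n : ℕ) (μ : List ℕ) : Prop :=
  List.Pairwise (· ≥ ·) μ ∧ (∀ x ∈ μ, 0 < x) ∧ μ.sum = n

/-- The operator `D_i f = c_i · f + P_i(x_i, x_{i+1}) · ∂_i f`. -/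
def Dop {n : ℕ} (dd : DDFam n) (c : ℕ → F) (Pp : ℕ → MvPolynomial (Fin 2) F)
    (i : ℕ) (h : i + 1 < n) : Pn n →ₗ[F] Pn n :=
  c i • LinearMap.id +
    LinearMap.mulLeft F (aeval ![(X ⟨i, by omega⟩ : Pn n), X ⟨i + 1, h⟩] (Pp i)) ∘ₗ dd i h

/-- `f` has integer coefficients. -/
def IsIntPoly {n : ℕ} (f : Pn n) : Prop :=
  ∀ d : Fin n →₀ ℕ, ∃ z : ℤ, coeff d f = (z : F)

section Aux

lemma q_ne_zero : (q : F) ≠ 0 := RatFunc.X_ne_zero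

variable {n i : ℕ}

lemma fin_ab_ne (h : i + 1 < n) : (⟨i, by omega⟩ : Fin n) ≠ ⟨i + 1, h⟩ := by
  simp [Fin.ext_iff]

lemma swapIdx_apply_a (h : i + 1 < n) (d : Fin n →₀ ℕ) :
    swapIdx n i h d ⟨i, by omega⟩ = d ⟨i + 1, h⟩ := by
  simp [swapIdx, transp, Finsupp.equivMapDomain_apply, Equiv.symm_swap, Equiv.swap_apply_left]

lemma swapIdx_apply_b (h : i + 1 < n) (d : Fin n →₀ ℕ) :
    swapIdx n i h d ⟨i + 1, h⟩ = d ⟨i, by omega⟩ := by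
  simp [swapIdx, transp, Finsupp.equivMapDomain_apply, Equiv.symm_swap, Equiv.swap_apply_right]

lemma swapIdx_swapIdx (h : i + 1 < n) (d : Fin n →₀ ℕ) :
    swapIdx n i h (swapIdx n i h d) = d := by
  ext x
  simp [swapIdx, transp, Finsupp.equivMapDomain_apply, Equiv.symm_swap, Equiv.swap_apply_self]

lemma swapIdx_eq_self (h : i + 1 < n) {d : Fin n →₀ ℕ}
    (hd : d ⟨i, by omega⟩ = d ⟨i + 1, h⟩) : swapIdx n i h d = d := by
  ext x
  simp only [swapIdx, Finsupp.equivMapDomain_apply, transp, Equiv.symm_swap]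
  rcases eq_or_ne x ⟨i, by omega⟩ with rfl | hx1
  · rw [Equiv.swap_apply_left]; exact hd.symm
  rcases eq_or_ne x ⟨i + 1, h⟩ with rfl | hx2
  · rw [Equiv.swap_apply_right]; exact hd
  · rw [Equiv.swap_apply_of_ne_of_ne hx1 hx2]

lemma swapIdx_eq_self_iff (h : i + 1 < n) (d : Fin n →₀ ℕ) :
    swapIdx n i h d = d ↔ d ⟨i, by omega⟩ = d ⟨i + 1, h⟩ := by
  refine ⟨fun hd => ?_, swapIdx_eq_self h⟩
  have := DFunLike.congr_fun hd (⟨i, by omega⟩ : Fin n)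
  rw [swapIdx_apply_a] at this
  exact this.symm

lemma coeff_rename_transp (h : i + 1 < n) (f : Pn n) (e : Fin n →₀ ℕ) :
    MvPolynomial.coeff e (rename (⇑(transp n i h)) f) = MvPolynomial.coeff (swapIdx n i h e) f := by
  have he : Finsupp.mapDomain (⇑(transp n i h)) (swapIdx n i h e) = e := by
    rw [← Finsupp.equivMapDomain_eq_mapDomain]
    exact swapIdx_swapIdx h e
  conv_lhs => rw [← he]
  exact coeff_rename_mapDomain _ (transp n i h).injective f _

lemma Rop_monomial (h : i + 1 < n) (d : Fin n →₀ ℕ) (r : F) :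
    Rop i h (monomial d r) = r • Rval i h d := by
  have hb : (basisMonomials (Fin n) F) d = monomial d (1 : F) := by
    rw [coe_basisMonomials]
  have hm : (monomial d r : Pn n) = r • (basisMonomials (Fin n) F) d := by
    rw [hb, smul_monomial, smul_eq_mul, mul_one]
  rw [Rop, hm, map_smul, Module.Basis.constr_basis]

end Aux
section Aux2
variable {n i : ℕ}

lemma self_eq_swapIdx_iff (h : i + 1 < n) (d : Fin n →₀ ℕ) :
    d = swapIdx n i h d ↔ d ⟨i, by omega⟩ = d ⟨i + 1, h⟩ := by
  rw [eq_comm, swapIdx_eq_self_iff]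

lemma fin_norm_a (h : i + 1 < n) (p : i < n) :
    (⟨i, p⟩ : Fin n) = (⟨i, Nat.lt_of_succ_lt h⟩ : Fin n) := rfl

lemma fin_norm_b (h : i + 1 < n) (p : i + 1 < n) :
    (⟨i + 1, p⟩ : Fin n) = (⟨i + 1, h⟩ : Fin n) := rfl

lemma coeff_Rop (h : i + 1 < n) (f : Pn n) (e : Fin n →₀ ℕ) :
    coeff e (Rop i h f) =
      if e ⟨i + 1, h⟩ < e ⟨i, by omega⟩ then coeff (swapIdx n i h e) f
      else if e ⟨i, by omega⟩ < e ⟨i + 1, h⟩ then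
        (1 - q) * coeff e f + q * coeff (swapIdx n i h e) f
      else coeff e f := by
  induction f using MvPolynomial.induction_on' with
  | add p p' hp hp' =>
    simp only [map_add, coeff_add, hp, hp']
    split_ifs <;> ring
  | monomial d r =>
    rw [Rop_monomial h, coeff_smul, smul_eq_mul]
    simp only [Rval, apply_ite (coeff e), coeff_smul, coeff_add, coeff_monomial, smul_eq_mul]
    split_ifs
    all_goals try ring
    all_goals subst_vars
    all_goals exfalso
    all_goals simp only [fin_norm_a h, fin_norm_b h, swapIdx_apply_a h, swapIdx_apply_b h, swapIdx_swapIdx h, swapIdx_eq_self_iff h, self_eq_swapIdx_iff h] at *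
    all_goals (first | omega | simp_all)

end Aux2
section Main
variable {n i : ℕ}

lemma X_sub_X_ne (h : i + 1 < n) :
    (X (⟨i, by omega⟩ : Fin n) - X ⟨i + 1, h⟩ : Pn n) ≠ 0 := by
  intro h0
  have := congrArg (coeff (Finsupp.single (⟨i, by omega⟩ : Fin n) 1)) h0
  rw [coeff_sub, coeff_X_same, coeff_X', if_neg, coeff_zero] at this
  · simp at this
  · rw [Finsupp.single_left_inj one_ne_zero]
    exact (fin_ab_ne h).symm

lemma factor_ne (h : i + 1 < n) :
    (X (⟨i + 1, h⟩ : Fin n) - C q * X ⟨i, by omega⟩ : Pn n) ≠ 0 := by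
  intro h0
  have := congrArg (coeff (Finsupp.single (⟨i + 1, h⟩ : Fin n) 1)) h0
  rw [coeff_sub, coeff_X_same, coeff_C_mul, coeff_X', if_neg, coeff_zero] at this
  · simp at this
  · rw [Finsupp.single_left_inj one_ne_zero]
    exact fin_ab_ne h

lemma Aop_eq (h : i + 1 < n) (dd : DDFam n) (hdd : IsDD dd) (g : Pn n) :
    Aop dd i h g
      = g + (X (⟨i + 1, h⟩ : Fin n) - C q * X ⟨i, by omega⟩) * dd i h g := by
  have h1 := hdd i h g
  have h2 := hdd i h (X (⟨i, by omega⟩ : Fin n) * g)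
  have h3 : rename (⇑(transp n i h)) (X (⟨i, by omega⟩ : Fin n) * g)
      = X (⟨i + 1, h⟩ : Fin n) * rename (⇑(transp n i h)) g := by
    rw [map_mul, rename_X]
    congr 2
    exact Equiv.swap_apply_left _ _
  have h4 : dd i h (X (⟨i, by omega⟩ : Fin n) * g)
      = g + X (⟨i + 1, h⟩ : Fin n) * dd i h g := by
    apply mul_left_cancel₀ (X_sub_X_ne h)
    rw [h2, h3]
    have h5 : (X (⟨i, by omega⟩ : Fin n) - X ⟨i + 1, h⟩)
          * (g + X (⟨i + 1, h⟩ : Fin n) * dd i h g)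
        = (X (⟨i, by omega⟩ : Fin n) - X ⟨i + 1, h⟩) * g
          + X (⟨i + 1, h⟩ : Fin n)
            * ((X (⟨i, by omega⟩ : Fin n) - X ⟨i + 1, h⟩) * dd i h g) := by
      ring
    rw [h5, h1]
    ring
  show dd i h (X (⟨i, by omega⟩ : Fin n) * g)
      - q • (X (⟨i, by omega⟩ : Fin n) * dd i h g) = _
  rw [h4, smul_eq_C_mul]
  ring

theorem stmt10' (n : ℕ) (hn : 2 ≤ n) (dd : DDFam n) (hdd : IsDD dd)
    (i : ℕ) (h : i + 1 < n) (f : Pn n) :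
    (Aop dd i h f = f ↔ rename (⇑(transp n i h)) f = f) ∧
    (Rop i h f = f ↔ rename (⇑(transp n i h)) f = f) := by
  constructor
  · constructor
    · intro hAf
      rw [Aop_eq h dd hdd f] at hAf
      have ht : (X (⟨i + 1, h⟩ : Fin n) - C q * X ⟨i, by omega⟩) * dd i h f = 0 :=
        add_eq_left.mp hAf
      rcases mul_eq_zero.mp ht with h0 | h0
      · exact absurd h0 (factor_ne h)
      · have h1 := hdd i h f
        rw [h0, mul_zero] at h1
        exact (sub_eq_zero.mp h1.symm).symm
    · intro hs
      have hd0 : dd i h f = 0 := by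
        have h1 := hdd i h f
        rw [hs, sub_self] at h1
        rcases mul_eq_zero.mp h1 with h0 | h0
        · exact absurd h0 (X_sub_X_ne h)
        · exact h0
      rw [Aop_eq h dd hdd f, hd0, mul_zero, add_zero]
  · have key : ∀ e : Fin n →₀ ℕ,
        coeff e (rename (⇑(transp n i h)) f) = coeff (swapIdx n i h e) f :=
      coeff_rename_transp h f
    constructor
    · intro hR
      ext e
      rw [key e]
      have hcoef : ∀ e', coeff e' (Rop i h f) = coeff e' f := fun e' => by rw [hR]
      rcases lt_trichotomy (e ⟨i, by omega⟩) (e ⟨i + 1, h⟩) with hlt | heq | hgt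
      · have h1 := hcoef e
        rw [coeff_Rop h, if_neg (by omega), if_pos hlt] at h1
        have h2 : q * coeff (swapIdx n i h e) f = q * coeff e f := by
          linear_combination h1
        exact mul_left_cancel₀ q_ne_zero h2
      · rw [swapIdx_eq_self h heq]
      · have h1 := hcoef e
        rwa [coeff_Rop h, if_pos hgt] at h1
    · intro hs
      have hcc : ∀ e, coeff (swapIdx n i h e) f = coeff e f := fun e => by
        rw [← key e, hs]
      ext e
      rw [coeff_Rop h]
      split_ifs with h1 h2
      · exact hcc e
      · rw [hcc e]; ring
      · rfl

end Main

/-- `A_i` and `R_i` have the same invariant vectors, namely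
the `i`-symmetric polynomials. -/
theorem stmt10 (n : ℕ) (hn : 2 ≤ n) (dd : DDFam n) (hdd : IsDD dd)
    (i : ℕ) (h : i + 1 < n) (f : Pn n) :
    (Aop dd i h f = f ↔ rename (⇑(transp n i h)) f = f) ∧
    (Rop i h f = f ↔ rename (⇑(transp n i h)) f = f) :=
  stmt10' n hn dd hdd i h f

end
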